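/- arXiv:1401.3581 — 3 statements merged into one kernel-verified Lean document; each statement's English description precedes it below -/
import Mathlib

section
/- Let K be a closed convex cone in R^m and H a linear subspace of R^m. Then the following are equivalent: (1) H is invariant under the lattice-like operations of K (i.e., for all x, y in H, x - P_K(x-y) ∈ H and x + P_K(y-x) ∈ H); (2) P_K(H) ⊆ H; (3) P_H(K) ⊆ K. -/
open scoped RealInnerProductSpace

/-- `p` is the metric projection (nearest point) of `x` onto the set `D`. -/
def IsProjection {E : Type*} [NormedAddCommGroup E] (D : Set E) (x p : E) : Prop :=
  p ∈ D ∧ ∀ z ∈ D, dist x p ≤ dist x z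

section aux
variable {E : Type*} [NormedAddCommGroup E] [InnerProductSpace ℝ E]

lemma isProjection_iff_inner {K : Set E} (hK : Convex ℝ K) (x p : E) :
    IsProjection K x p ↔ p ∈ K ∧ ∀ w ∈ K, ⟪x - p, w - p⟫ ≤ 0 := by
  have hbdd : BddBelow (Set.range fun w : K => ‖x - (w : E)‖) :=
    ⟨0, by rintro _ ⟨w, rfl⟩; exact norm_nonneg _⟩
  constructor
  · rintro ⟨hpK, hmin⟩
    haveI : Nonempty K := ⟨⟨p, hpK⟩⟩
    refine ⟨hpK, (norm_eq_iInf_iff_real_inner_le_zero hK hpK).mp ?_⟩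
    refine le_antisymm (le_ciInf fun w => ?_) (ciInf_le hbdd (⟨p, hpK⟩ : K))
    simpa [dist_eq_norm] using hmin w w.2
  · rintro ⟨hpK, hinner⟩
    refine ⟨hpK, fun z hz => ?_⟩
    have h := (norm_eq_iInf_iff_real_inner_le_zero hK hpK).mpr hinner
    calc dist x p = ‖x - p‖ := dist_eq_norm _ _
      _ ≤ ‖x - (⟨z, hz⟩ : K)‖ := h ▸ ciInf_le hbdd (⟨z, hz⟩ : K)
      _ = dist x z := (dist_eq_norm _ _).symm

lemma isProjection_unique {K : Set E} (hK : Convex ℝ K) {x p q : E}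
    (hp : IsProjection K x p) (hq : IsProjection K x q) : p = q := by
  rw [isProjection_iff_inner hK] at hp hq
  have h1 := hp.2 q hq.1
  have h2 := hq.2 p hp.1
  have : ⟪q - p, q - p⟫ ≤ 0 := by
    have e : ⟪q - p, q - p⟫ = ⟪x - p, q - p⟫ + ⟪x - q, p - q⟫ := by
      simp only [inner_sub_left, inner_sub_right]; ring
    linarith [e ▸ add_nonpos h1 h2]
  exact (sub_eq_zero.mp (real_inner_self_nonpos.mp this)).symm

end aux

/-- For a closed convex cone `K` and a linear subspace `H` of `ℝ^m`, the following
are equivalent: (1) `H` is invariant under the lattice-like operations of `K`;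
(2) `P_K(H) ⊆ H`; (3) `P_H(K) ⊆ K`. -/
theorem subspace_latticeLike_characterization {m : ℕ}
    (K : Set (EuclideanSpace ℝ (Fin m)))
    (hne : K.Nonempty) (hcl : IsClosed K)
    (hadd : ∀ u ∈ K, ∀ v ∈ K, u + v ∈ K)
    (hsmul : ∀ t : ℝ, 0 ≤ t → ∀ u ∈ K, t • u ∈ K)
    (H : Submodule ℝ (EuclideanSpace ℝ (Fin m))) :
    ((∀ x ∈ H, ∀ y ∈ H,
        (∀ p, IsProjection K (x - y) p → x - p ∈ H) ∧
        (∀ q, IsProjection K (y - x) q → x + q ∈ H)) ↔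
      (∀ x ∈ H, ∀ p, IsProjection K x p → p ∈ H)) ∧
    ((∀ x ∈ H, ∀ p, IsProjection K x p → p ∈ H) ↔
      (∀ x ∈ K, (Submodule.orthogonalProjection H x : EuclideanSpace ℝ (Fin m)) ∈ K)) := by
  have hKzero : (0 : EuclideanSpace ℝ (Fin m)) ∈ K := by
    obtain ⟨u, hu⟩ := hne
    simpa using hsmul 0 le_rfl u hu
  have hconv : Convex ℝ K := fun u hu v hv a b ha hb _ =>
    hadd _ (hsmul a ha u hu) _ (hsmul b hb v hv)
  constructor
  · constructor
    · intro h1 x hx p hp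
      have := ((h1 x hx 0 H.zero_mem).1 p (by simpa using hp))
      have : x - (x - p) ∈ H := H.sub_mem hx this
      simpa using this
    · intro h2 x hx y hy
      refine ⟨fun p hp => H.sub_mem hx (h2 _ (H.sub_mem hx hy) p hp),
        fun q hq => H.add_mem hx (h2 _ (H.sub_mem hy hx) q hq)⟩
  · constructor
    · -- (2) → (3)
      intro h2 u hu
      set x : EuclideanSpace ℝ (Fin m) := (Submodule.orthogonalProjection H u : EuclideanSpace ℝ (Fin m)) with hxdef
      have hxH : x ∈ H := SetLike.coe_mem _
      obtain ⟨p, hpK, hpmin⟩ := exists_norm_eq_iInf_of_complete_convex ⟨0, hKzero⟩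
        (hcl.isComplete) hconv x
      have hproj : IsProjection K x p := by
        rw [isProjection_iff_inner hconv]
        exact ⟨hpK, (norm_eq_iInf_iff_real_inner_le_zero hconv hpK).mp hpmin⟩
      have hpH : p ∈ H := h2 x hxH p hproj
      have hvar := ((isProjection_iff_inner hconv x p).mp hproj).2
      -- ⟪x - p, p⟫ = 0
      have h0 : ⟪x - p, (0:EuclideanSpace ℝ (Fin m)) - p⟫ ≤ 0 := hvar 0 hKzero
      have h2p : ⟪x - p, (2:ℝ) • p - p⟫ ≤ 0 := hvar _ (hsmul 2 (by norm_num) p hpK)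
      have hpp : ⟪x - p, p⟫ = 0 := by
        have e1 : ⟪x - p, (0:EuclideanSpace ℝ (Fin m)) - p⟫ = -⟪x - p, p⟫ := by
          rw [zero_sub, inner_neg_right]
        have e2 : ⟪x - p, (2:ℝ) • p - p⟫ = ⟪x - p, p⟫ := by
          rw [inner_sub_right, real_inner_smul_right]; ring
        rw [e1] at h0; rw [e2] at h2p; linarith
      have hu' : ⟪x - p, u + p - p⟫ ≤ 0 := hvar _ (hadd u hu p hpK)
      have huip : ⟪x - p, u⟫ ≤ 0 := by simpa using hu'
      have hortho : u - x ∈ Hᗮ := Submodule.sub_starProjection_mem_orthogonal u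
      have hxp : x - p ∈ H := H.sub_mem hxH hpH
      have hinner0 : ⟪x - p, u - x⟫ = 0 := by
        exact hortho (x - p) hxp
      have hself : ⟪x - p, x - p⟫ ≤ 0 := by
        have e : ⟪x - p, x - p⟫ = ⟪x - p, u⟫ - ⟪x - p, u - x⟫ - ⟪x - p, p⟫ := by
          simp only [inner_sub_right]; ring
        rw [e, hinner0, hpp]; linarith
      have : x - p = 0 := real_inner_self_nonpos.mp hself
      have hxeq : x = p := by rwa [sub_eq_zero] at this
      rw [show x = p from hxeq]; exact hpK
    · -- (3) → (2)
      intro h3 x hx p hp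
      set p' : EuclideanSpace ℝ (Fin m) := (Submodule.orthogonalProjection H p : EuclideanSpace ℝ (Fin m)) with hp'def
      have hp'K : p' ∈ K := h3 p hp.1
      have hp'proj : IsProjection K x p' := by
        refine ⟨hp'K, fun z hz => ?_⟩
        have hle : dist x p' ≤ dist x p := by
          have hx' : (Submodule.orthogonalProjection H x : EuclideanSpace ℝ (Fin m)) = x :=
            Submodule.starProjection_eq_self_iff.mpr hx
          have : x - p' = (Submodule.orthogonalProjection H (x - p) : EuclideanSpace ℝ (Fin m)) := by
            rw [map_sub]; push_cast; rw [hx']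
          rw [dist_eq_norm, dist_eq_norm, this]
          calc ‖(Submodule.orthogonalProjection H (x - p) : EuclideanSpace ℝ (Fin m))‖
              ≤ ‖Submodule.orthogonalProjection H‖ * ‖x - p‖ := (Submodule.orthogonalProjection H).le_opNorm _
            _ ≤ 1 * ‖x - p‖ := by
                have := Submodule.orthogonalProjectionOnto_norm_le H
                nlinarith [norm_nonneg (x - p)]
            _ = ‖x - p‖ := one_mul _
        exact hle.trans (hp.2 z hz)
      have := isProjection_unique hconv hp hp'proj
      rw [this]; exact SetLike.coe_mem _
end

section
/- Let K be a closed convex cone in R^m, H a subspace with P_H(K) ⊆ K, and G a subspace of H. Then P_G(K ∩ H) ⊆ K ∩ H if and only if P_G(K) ⊆ K. -/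
open scoped RealInnerProductSpace

/-- Let `K` be a closed convex cone, `H` a subspace with `P_H(K) ⊆ K`, and `G ⊆ H`
a subspace. Then `P_G(K ∩ H) ⊆ K ∩ H` iff `P_G(K) ⊆ K`. -/
theorem latticeLike_subspace_transfer {m : ℕ}
    (K : Set (EuclideanSpace ℝ (Fin m)))
    (hne : K.Nonempty) (hcl : IsClosed K)
    (hadd : ∀ u ∈ K, ∀ v ∈ K, u + v ∈ K)
    (hsmul : ∀ t : ℝ, 0 ≤ t → ∀ u ∈ K, t • u ∈ K)
    (G H : Submodule ℝ (EuclideanSpace ℝ (Fin m))) (hGH : G ≤ H)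
    (hH : ∀ x ∈ K, (H.orthogonalProjectionOnto x : EuclideanSpace ℝ (Fin m)) ∈ K) :
    (∀ x ∈ K ∩ (H : Set (EuclideanSpace ℝ (Fin m))),
        (G.orthogonalProjectionOnto x : EuclideanSpace ℝ (Fin m)) ∈
          K ∩ (H : Set (EuclideanSpace ℝ (Fin m)))) ↔
      (∀ x ∈ K, (G.orthogonalProjectionOnto x : EuclideanSpace ℝ (Fin m)) ∈ K) := by
  constructor
  · intro h x hx
    have hPH : (H.orthogonalProjectionOnto x : EuclideanSpace ℝ (Fin m)) ∈
        K ∩ (H : Set (EuclideanSpace ℝ (Fin m))) :=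
      ⟨hH x hx, (H.orthogonalProjectionOnto x).2⟩
    have := (h _ hPH).1
    rwa [← Submodule.starProjection_apply H x,
      Submodule.orthogonalProjectionOnto_starProjection_of_le hGH] at this
  · intro h x hx
    exact ⟨h x hx.1, hGH (G.orthogonalProjectionOnto x).2⟩
end

section
/- Let V be a Euclidean Jordan algebra with Jordan frame {c_1,...,c_r} and V_r = span{c_1,...,c_r}. Then the cone of squares of V intersected with V_r equals the cone generated by the frame: Q ∩ V_r = {Σ λ_i c_i : λ_i ≥ 0}. -/
open scoped RealInnerProductSpace

/-- A Euclidean Jordan algebra structure on a real inner product space `V`: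
a commutative bilinear product satisfying the Jordan identity, for which the
inner product is associative, together with a unit element. -/
structure EJA (V : Type*) [NormedAddCommGroup V] [InnerProductSpace ℝ V] where
  mul : V →ₗ[ℝ] V →ₗ[ℝ] V
  comm : ∀ x y : V, mul x y = mul y x
  jordan : ∀ x y : V, mul x (mul (mul x x) y) = mul (mul x x) (mul x y)
  assoc_inner : ∀ x y z : V, ⟪mul x y, z⟫ = ⟪y, mul x z⟫
  one : V
  one_mul : ∀ x : V, mul one x = x

variable {V : Type*} [NormedAddCommGroup V] [InnerProductSpace ℝ V]

/-- The cone of squares of a Euclidean Jordan algebra. -/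
def EJA.coneOfSquares (J : EJA V) : Set V := {x | ∃ y, x = J.mul y y}

/-- An idempotent element. -/
def EJA.IsIdem (J : EJA V) (c : V) : Prop := J.mul c c = c

/-- A primitive idempotent: a nonzero idempotent which is not the sum of two
nonzero orthogonal idempotents. -/
def EJA.IsPrimitiveIdem (J : EJA V) (c : V) : Prop :=
  J.IsIdem c ∧ c ≠ 0 ∧
    ∀ u v : V, J.IsIdem u → J.IsIdem v → J.mul u v = 0 → c = u + v → u = 0 ∨ v = 0

/-- A Jordan frame: a complete system of mutually orthogonal primitive
idempotents summing to the unit. -/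
def EJA.IsJordanFrame (J : EJA V) {r : ℕ} (c : Fin r → V) : Prop :=
  (∀ i, J.IsPrimitiveIdem (c i)) ∧
    (∀ i j, i ≠ j → J.mul (c i) (c j) = 0) ∧ (∑ i, c i) = J.one

/-- An ideal of a Euclidean Jordan algebra. -/
def EJA.IsIdeal (J : EJA V) (I : Submodule ℝ V) : Prop :=
  ∀ x ∈ I, ∀ y : V, J.mul x y ∈ I

/-- A simple Euclidean Jordan algebra: nontrivial and with no nontrivial ideal. -/
def EJA.IsSimple (J : EJA V) : Prop :=
  (⊤ : Submodule ℝ V) ≠ ⊥ ∧ ∀ I : Submodule ℝ V, J.IsIdeal I → I = ⊥ ∨ I = ⊤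


lemma EJA.cubic (J : EJA V) {c : V} (hc : J.mul c c = c) (z : V) :
    J.mul c (J.mul c (J.mul c z)) = (3/2:ℝ) • J.mul c (J.mul c z) - (1/2:ℝ) • J.mul c z := by
  have h1 := J.jordan (c + z) c
  have h2 := J.jordan (c - z) c
  have h4 := J.jordan z c
  simp only [map_add, map_sub, LinearMap.add_apply, LinearMap.sub_apply, hc,
    J.comm z c, J.comm (J.mul c z) c, J.comm (J.mul z z) c,
    J.comm (J.mul z z) (J.mul c z)] at h1 h2 h4
  linear_combination (norm := module) (1/4:ℝ) • h1 - (1/4:ℝ) • h2 - (1/2:ℝ) • h4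

lemma EJA.inner_sq_idem_nonneg (J : EJA V) {c : V} (hc : J.mul c c = c) (y : V) :
    0 ≤ ⟪J.mul y y, c⟫ := by
  set a := J.mul c y with ha
  set b := J.mul c a with hb
  have hcb : J.mul c b = (3/2:ℝ) • b - (1/2:ℝ) • a := J.cubic hc y
  have hby : ⟪b, y⟫ = ⟪a, a⟫ := by rw [hb, J.assoc_inner c a y]
  have hab : ⟪a, b⟫ = (3/2) * ⟪b, y⟫ - (1/2) * ⟪a, y⟫ := by
    rw [ha, J.assoc_inner c y b, hcb, inner_sub_right, real_inner_smul_right,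
      real_inner_smul_right, real_inner_comm y b, real_inner_comm y a]
  have hbb : ⟪b, b⟫ = (3/2) * ⟪a, b⟫ - (1/2) * ⟪a, a⟫ := by
    nth_rewrite 1 [hb]
    rw [J.assoc_inner c a b, hcb, inner_sub_right, real_inner_smul_right,
      real_inner_smul_right]
  have h1 : (0:ℝ) ≤ ⟪a - b, a - b⟫ := real_inner_self_nonneg
  have h2 : (0:ℝ) ≤ ⟪(2:ℝ) • b - a, (2:ℝ) • b - a⟫ := real_inner_self_nonneg
  simp only [inner_sub_left, inner_sub_right, real_inner_smul_left,
    real_inner_smul_right] at h1 h2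
  have hgoal : ⟪J.mul y y, c⟫ = ⟪a, y⟫ := by
    rw [J.assoc_inner y y c, J.comm y c, ← ha, real_inner_comm]
  rw [hgoal]
  nlinarith [hby, hab, hbb, h1, h2, real_inner_comm a b]

/-- For a Jordan frame `{c₁,…,c_r}`, the cone of squares intersected with
`V_r = span{c₁,…,c_r}` is the cone generated by the frame. -/
theorem coneOfSquares_inter_span_frame
    {V : Type*} [NormedAddCommGroup V] [InnerProductSpace ℝ V]
    [FiniteDimensional ℝ V] (J : EJA V)
    {r : ℕ} (c : Fin r → V) (hc : J.IsJordanFrame c) :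
    J.coneOfSquares ∩ (Submodule.span ℝ (Set.range c) : Set V) =
      {x | ∃ lam : Fin r → ℝ, (∀ i, 0 ≤ lam i) ∧ x = ∑ i, lam i • c i} := by
  obtain ⟨hprim, horth, -⟩ := hc
  have hidem : ∀ i, J.mul (c i) (c i) = c i := fun i => (hprim i).1
  ext x
  constructor
  · rintro ⟨⟨y, rfl⟩, hx⟩
    obtain ⟨μ, hμ⟩ := (Submodule.mem_span_range_iff_exists_fun ℝ).mp hx
    refine ⟨μ, fun i => ?_, hμ.symm⟩
    have hinner : ⟪J.mul y y, c i⟫ = μ i * ⟪c i, c i⟫ := by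
      rw [← hμ, sum_inner]
      rw [Finset.sum_eq_single i]
      · rw [real_inner_smul_left]
      · intro j _ hj
        rw [real_inner_smul_left]
        have : ⟪c j, c i⟫ = 0 := by
          rw [← hidem j, J.assoc_inner, horth j i hj, inner_zero_right]
        rw [this, mul_zero]
      · simp
    have hpos : 0 < ⟪c i, c i⟫ := by
      rw [real_inner_self_eq_norm_mul_norm]
      have h0 : 0 < ‖c i‖ := norm_pos_iff.mpr (hprim i).2.1
      exact mul_pos h0 h0
    have hnn : 0 ≤ ⟪J.mul y y, c i⟫ := J.inner_sq_idem_nonneg (hidem i) y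
    nlinarith [hinner, hpos, hnn]
  · rintro ⟨lam, hlam, rfl⟩
    constructor
    · refine ⟨∑ i, Real.sqrt (lam i) • c i, ?_⟩
      simp only [map_sum, map_smul, LinearMap.sum_apply, LinearMap.smul_apply,
        Finset.smul_sum, smul_smul]
      refine Finset.sum_congr rfl fun i _ => Eq.symm ?_
      rw [Finset.sum_eq_single i (fun j _ hj => by rw [horth j i hj, smul_zero])
        (by simp), hidem i, Real.mul_self_sqrt (hlam i)]
    · exact Submodule.sum_mem _ fun i _ =>
        Submodule.smul_mem _ _ (Submodule.subset_span ⟨i, rfl⟩)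
end
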